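/- Soundness of the (Z) rewrite rule: let A be a Boolean path sum with path-variable space 𝔽₂^{k+1} such that P_A(v, z) = z + R(v) for some R : 𝔽₂^k → 𝔽₂, and such that the output and input functions do not depend on the last coordinate z. Then eval(A) = 0, the zero matrix. -/

import Mathlib

/-- The sign `(−1)^b` for `b ∈ 𝔽₂`: `1` if `b = 0` and `−1` if `b = 1`. -/
noncomputable def pmSign (b : ZMod 2) : ℂ := if b = 0 then 1 else -1

/-- The matrix `|b⟩⟨c|` whose `(b',c')` entry is `1` if `b' = b` and `c' = c`, else `0`. -/
noncomputable def ketbra {α β : Type*} [DecidableEq α] [DecidableEq β] (b : α) (c : β) :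
    Matrix α β ℂ := fun b' c' => if b' = b ∧ c' = c then 1 else 0

/-- Evaluation of a Boolean path sum with path-variable space `V`, scalar `s`,
phase `P`, output function `O` and input function `I`:
`s · ∑_{v ∈ V} (−1)^{P v} |O v⟩⟨I v|`. -/
noncomputable def psEval {V α β : Type*} [Fintype V] [DecidableEq α] [DecidableEq β]
    (s : ℂ) (P : V → ZMod 2) (O : V → α) (I : V → β) : Matrix α β ℂ :=
  s • ∑ v, pmSign (P v) • ketbra (O v) (I v)

/-- Soundness of the (Z) rewrite rule: if the phase of a path sum over
`𝔽₂^k × 𝔽₂` is `z + R(v)` where `z` is the last variable, and the output and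
input functions do not depend on `z`, then the path sum evaluates to the zero
matrix. -/
theorem psEval_z {k m n : ℕ}
    (sA : ℂ)
    (R : (Fin k → ZMod 2) → ZMod 2)
    (O : (Fin k → ZMod 2) → (Fin m → ZMod 2))
    (I : (Fin k → ZMod 2) → (Fin n → ZMod 2)) :
    psEval (V := (Fin k → ZMod 2) × ZMod 2) sA
      (fun p => p.2 + R p.1) (fun p => O p.1) (fun p => I p.1) =
      (0 : Matrix (Fin m → ZMod 2) (Fin n → ZMod 2) ℂ) := by
  unfold psEval
  rw [Fintype.sum_prod_type]
  have key : ∀ x : ZMod 2, pmSign (0 + x) + pmSign (1 + x) = 0 := by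
    intro x; fin_cases x <;> simp [pmSign, show (1:ZMod 2)+1=0 from rfl] <;> split_ifs <;> norm_num <;> contradiction
  have h : ∀ v : Fin k → ZMod 2,
      ∑ z : ZMod 2, pmSign (z + R v) • ketbra (O v) (I v) = 0 := by
    intro v
    rw [← Finset.sum_smul]
    have hu : (Finset.univ : Finset (ZMod 2)) = {0, 1} := by decide
    rw [hu, Finset.sum_insert (by decide), Finset.sum_singleton, key, zero_smul]
  simp only [h, Finset.sum_const_zero, smul_zero]
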